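/- Let (A, ξ₀) be a rooted tree with finite vertex set, u, w : V(A) → (0,∞), 1 < p < q < ∞, 0 < σ < 1, and ξ ∈ V(A). Let A_{ξ,σ} be the induced subgraph on {η ≥ ξ : ‖w‖_{l_q(A_η)} ≥ σ ‖w‖_{l_q(A_ξ)}}. Then ‖u‖_{l_{p'}(A_{ξ,σ})} · ‖w‖_{l_q(A_ξ)} ≤ C(p,q,σ) · sup_{η ∈ V(A)} ‖u‖_{l_{p'}([ξ₀,η])} · ‖w‖_{l_q(A_η)}, where C(p,q,σ) may depend only on p, q, σ. -/

import Mathlib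

open scoped ENNReal NNReal BigOperators

/-- A rooted tree, encoded via its tree partial order: every "lower set" of a
vertex (the path from the root to it) is a finite chain containing the root. -/
structure TreeOrder (V : Type) where
  le : V → V → Prop
  le_refl : ∀ a, le a a
  le_trans : ∀ a b c, le a b → le b c → le a c
  le_antisymm : ∀ a b, le a b → le b a → a = b
  root : V
  root_le : ∀ a, le root a
  finite_le : ∀ a : V, {b | le b a}.Finite
  chain_le : ∀ a b c, le b a → le c a → le b c ∨ le c b

/-- The path `[ξ₀, ξ]` from the root to `ξ`. -/
def TreeOrder.pathSet {V : Type} (T : TreeOrder V) (ξ : V) : Set V := {η | T.le η ξ}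

/-- The subtree `T_ξ` of all vertices `≥ ξ`. -/
def TreeOrder.subtree {V : Type} (T : TreeOrder V) (ξ : V) : Set V := {η | T.le ξ η}

/-- The segment `[ξ, η] = {ζ : ξ ≤ ζ ≤ η}`. -/
def TreeOrder.seg {V : Type} (T : TreeOrder V) (ξ η : V) : Set V :=
  {ζ | T.le ξ ζ ∧ T.le ζ η}

/-- The tree distance between comparable vertices `ξ ≤ η`:
one less than the number of vertices on the segment `[ξ, η]`. -/
noncomputable def TreeOrder.tdist {V : Type} (T : TreeOrder V) (ξ η : V) : ℕ :=
  (T.seg ξ η).ncard - 1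

/-- The level of a vertex: its distance to the root. -/
noncomputable def TreeOrder.level {V : Type} (T : TreeOrder V) (ξ : V) : ℕ :=
  T.tdist T.root ξ

/-- `V_k(ξ)`: the set of vertices `≥ ξ` at tree distance `k` from `ξ`. -/
noncomputable def TreeOrder.VSet {V : Type} (T : TreeOrder V) (ξ : V) (k : ℕ) : Set V :=
  {η | T.le ξ η ∧ T.tdist ξ η = k}

/-- `‖w‖_{l_r(s)} = (∑_{η ∈ s} w(η)^r)^{1/r}` (real-valued; the index sets used
below are finite). -/
noncomputable def rNorm {V : Type} (s : Set V) (w : V → ℝ) (r : ℝ) : ℝ :=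
  (∑' η : s, (w η) ^ r) ^ (1 / r)

/-- `V_{ξ,σ} = {η ≥ ξ : ‖w‖_{l_q(A_η)} ≥ σ ‖w‖_{l_q(A_ξ)}}`. -/
def VSig {V : Type} (T : TreeOrder V) (w : V → ℝ) (q σ : ℝ) (ξ : V) : Set V :=
  {η | T.le ξ η ∧ σ * rNorm (T.subtree ξ) w q ≤ rNorm (T.subtree η) w q}

/-- The set of maximal vertices of the induced subgraph `A_{ξ,σ}`. -/
def VMaxSig {V : Type} (T : TreeOrder V) (w : V → ℝ) (q σ : ℝ) (ξ : V) : Set V :=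
  {ζ ∈ VSig T w q σ ξ | ∀ η ∈ VSig T w q σ ξ, T.le ζ η → ζ = η}

open Classical

lemma sum_biUnion_le' {ι V : Type} [DecidableEq V] (s : Finset ι) (t : ι → Finset V)
    (f : V → ℝ) (hf : ∀ x, 0 ≤ f x) :
    ∑ x ∈ s.biUnion t, f x ≤ ∑ a ∈ s, ∑ x ∈ t a, f x := by
  induction s using Finset.induction_on with
  | empty => simp
  | insert _ _ h ih =>
    rename_i a s
    rw [Finset.biUnion_insert, Finset.sum_insert h]
    calc ∑ x ∈ t a ∪ s.biUnion t, f x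
        ≤ (∑ x ∈ t a, f x) + ∑ x ∈ s.biUnion t, f x := by
          have := Finset.sum_union_inter (s₁ := t a) (s₂ := s.biUnion t) (f := f)
          have hnn : 0 ≤ ∑ x ∈ t a ∩ s.biUnion t, f x :=
            Finset.sum_nonneg fun x _ => hf x
          linarith
      _ ≤ _ := by linarith [ih]

lemma rNorm_eq {V : Type} [Fintype V] (s : Set V) (f : V → ℝ) (r : ℝ) :
    rNorm s f r = (∑ η ∈ s.toFinset, f η ^ r) ^ (1 / r) := by
  rw [rNorm, tsum_fintype]
  congr 1
  exact (Finset.sum_subtype _ (fun x => Set.mem_toFinset) (fun η => f η ^ r)).symm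

lemma rNorm_pos {V : Type} [Fintype V] {s : Set V} {f : V → ℝ} {r : ℝ}
    (hf : ∀ x, 0 < f x) (hr : 0 < r) {a : V} (ha : a ∈ s) : 0 < rNorm s f r := by
  rw [rNorm_eq]
  apply Real.rpow_pos_of_pos
  apply Finset.sum_pos (fun i _ => Real.rpow_pos_of_pos (hf i) r)
  exact ⟨a, Set.mem_toFinset.2 ha⟩

lemma rNorm_rpow {V : Type} [Fintype V] (s : Set V) (f : V → ℝ) {r : ℝ}
    (hf : ∀ x, 0 < f x) (hr : r ≠ 0) :
    rNorm s f r ^ r = ∑ η ∈ s.toFinset, f η ^ r := by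
  rw [rNorm_eq, one_div, Real.rpow_inv_rpow (Finset.sum_nonneg fun i _ =>
    (Real.rpow_pos_of_pos (hf i) r).le) hr]

lemma rNorm_nn {V : Type} [Fintype V] (s : Set V) (f : V → ℝ) (r : ℝ)
    (hf : ∀ x, 0 ≤ f x) : 0 ≤ rNorm s f r := by
  rw [rNorm_eq]
  exact Real.rpow_nonneg (Finset.sum_nonneg fun i _ => Real.rpow_nonneg (hf i) r) _


/-- For `1 < p < q < ∞`, `0 < σ < 1`, there is `C = C(p,q,σ)` such that on every finite
rooted tree with positive weights,
`‖u‖_{l_{p'}(A_{ξ,σ})} ‖w‖_{l_q(A_ξ)} ≤ C sup_η ‖u‖_{l_{p'}([ξ₀,η])} ‖w‖_{l_q(A_η)}`. -/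
theorem stmt3 (p q σ : ℝ) (hp : 1 < p) (hpq : p < q) (hσ0 : 0 < σ) (hσ1 : σ < 1) :
    ∃ C : ℝ, 0 < C ∧
      ∀ (V : Type) [Fintype V] (T : TreeOrder V) (u w : V → ℝ),
        (∀ ζ, 0 < u ζ) → (∀ ζ, 0 < w ζ) →
        ∀ ξ : V,
          rNorm (VSig T w q σ ξ) u (p / (p - 1)) * rNorm (T.subtree ξ) w q
            ≤ C * ⨆ η : V, rNorm (T.pathSet η) u (p / (p - 1)) * rNorm (T.subtree η) w q := by
  have hp1 : 0 < p - 1 := by linarith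
  have hq : 0 < q := by linarith
  set r : ℝ := p / (p - 1) with hrdef
  have hr : 0 < r := by positivity
  refine ⟨σ ^ (-q / r) * σ⁻¹, by positivity, ?_⟩
  intro V _ T u w hu hw ξ
  letI : PartialOrder V :=
    { le := T.le, le_refl := T.le_refl, le_trans := T.le_trans,
      le_antisymm := T.le_antisymm }
  have hξξ : ξ ∈ T.subtree ξ := T.le_refl ξ
  have ht : 0 < rNorm (T.subtree ξ) w q := rNorm_pos hw hq hξξ
  set S := ⨆ η : V, rNorm (T.pathSet η) u r * rNorm (T.subtree η) w q with hSdef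
  have hSb : ∀ η : V, rNorm (T.pathSet η) u r * rNorm (T.subtree η) w q ≤ S := by
    intro η
    rw [hSdef]
    exact le_ciSup (Set.Finite.bddAbove (Set.finite_range
      (fun η : V => rNorm (T.pathSet η) u r * rNorm (T.subtree η) w q))) η
  have hS : 0 < S :=
    lt_of_lt_of_le (mul_pos (rNorm_pos hu hr (show ξ ∈ T.pathSet ξ from T.le_refl ξ)) ht)
      (hSb ξ)
  have hwq : ∀ (s : Set V), rNorm s w q ^ q = ∑ η ∈ s.toFinset, w η ^ q :=
    fun s => rNorm_rpow s w hw hq.ne'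
  -- subtree mass lower bound for vertices of VSig
  have hmass : ∀ ζ ∈ VSig T w q σ ξ,
      σ ^ q * ∑ η ∈ (T.subtree ξ).toFinset, w η ^ q
        ≤ ∑ η ∈ (T.subtree ζ).toFinset, w η ^ q := by
    intro ζ hζ
    have h1 : (σ * rNorm (T.subtree ξ) w q) ^ q ≤ rNorm (T.subtree ζ) w q ^ q :=
      Real.rpow_le_rpow (by positivity) hζ.2 hq.le
    rwa [Real.mul_rpow hσ0.le ht.le, hwq, hwq] at h1
  set M := (VMaxSig T w q σ ξ).toFinset with hMdef
  -- every vertex of VSig lies below a maximal one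
  have hmaxabove : ∀ η ∈ VSig T w q σ ξ, ∃ ζ ∈ VMaxSig T w q σ ξ, T.le η ζ := by
    intro η hη
    obtain ⟨ζ, hζ, hmax⟩ := Set.Finite.exists_maximalFor id
      {x | x ∈ VSig T w q σ ξ ∧ T.le η x} (Set.toFinite _) ⟨η, hη, T.le_refl η⟩
    exact ⟨ζ, ⟨hζ.1, fun x hx hle => T.le_antisymm _ _ hle
      (hmax ⟨hx, T.le_trans _ _ _ hζ.2 hle⟩ hle)⟩, hζ.2⟩
  -- disjointness of subtrees of maximal vertices
  have hdisj : (M : Set V).PairwiseDisjoint (fun ζ => (T.subtree ζ).toFinset) := by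
    intro ζ₁ h1 ζ₂ h2 hne
    have h1' : ζ₁ ∈ VMaxSig T w q σ ξ := Set.mem_toFinset.1 h1
    have h2' : ζ₂ ∈ VMaxSig T w q σ ξ := Set.mem_toFinset.1 h2
    simp only [Function.onFun]
    rw [Finset.disjoint_left]
    intro x hx1 hx2
    rw [Set.mem_toFinset] at hx1 hx2
    rcases T.chain_le x ζ₁ ζ₂ hx1 hx2 with h | h
    · exact hne (h1'.2 ζ₂ h2'.1 h)
    · exact hne ((h2'.2 ζ₁ h1'.1 h).symm)
  -- counting the maximal vertices
  have hWpos : 0 < ∑ η ∈ (T.subtree ξ).toFinset, w η ^ q := by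
    rw [← hwq]; exact Real.rpow_pos_of_pos ht q
  have hsub : M.biUnion (fun ζ => (T.subtree ζ).toFinset) ⊆ (T.subtree ξ).toFinset := by
    intro x hx
    obtain ⟨ζ, hζ, hxζ⟩ := Finset.mem_biUnion.1 hx
    have hζ' : ζ ∈ VMaxSig T w q σ ξ := Set.mem_toFinset.1 hζ
    exact Set.mem_toFinset.2 (T.le_trans _ _ _ hζ'.1.1 (Set.mem_toFinset.1 hxζ))
  have hcard : (M.card : ℝ) * (σ ^ q * ∑ η ∈ (T.subtree ξ).toFinset, w η ^ q)
      ≤ ∑ η ∈ (T.subtree ξ).toFinset, w η ^ q := by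
    calc (M.card : ℝ) * (σ ^ q * ∑ η ∈ (T.subtree ξ).toFinset, w η ^ q)
        = ∑ _ζ ∈ M, σ ^ q * ∑ η ∈ (T.subtree ξ).toFinset, w η ^ q := by
          rw [Finset.sum_const, nsmul_eq_mul]
      _ ≤ ∑ ζ ∈ M, ∑ η ∈ (T.subtree ζ).toFinset, w η ^ q :=
          Finset.sum_le_sum fun ζ hζ => hmass ζ (Set.mem_toFinset.1 hζ).1
      _ = ∑ η ∈ M.biUnion (fun ζ => (T.subtree ζ).toFinset), w η ^ q :=
          (Finset.sum_biUnion hdisj).symm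
      _ ≤ _ := Finset.sum_le_sum_of_subset_of_nonneg hsub
          (fun i _ _ => (Real.rpow_pos_of_pos (hw i) q).le)
  have hσq : 0 < σ ^ q := Real.rpow_pos_of_pos hσ0 q
  have hMcard : (M.card : ℝ) ≤ σ ^ (-q) := by
    have h2 : (M.card : ℝ) * σ ^ q ≤ 1 := by
      rw [← mul_le_mul_iff_of_pos_right hWpos, one_mul, mul_assoc]; exact hcard
    rw [Real.rpow_neg hσ0.le, ← one_div]
    exact (le_div_iff₀ hσq).2 h2
  -- the bound on each maximal path
  set B := S / (σ * rNorm (T.subtree ξ) w q) with hBdef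
  have hB : 0 < B := div_pos hS (by positivity)
  have hpath : ∀ ζ ∈ M, ∑ η ∈ (T.pathSet ζ).toFinset, u η ^ r ≤ B ^ r := by
    intro ζ hζ
    have hζV : ζ ∈ VSig T w q σ ξ := (Set.mem_toFinset.1 hζ).1
    have hun : 0 ≤ rNorm (T.pathSet ζ) u r := rNorm_nn _ _ _ fun x => (hu x).le
    have h1 : rNorm (T.pathSet ζ) u r * (σ * rNorm (T.subtree ξ) w q) ≤ S :=
      le_trans (mul_le_mul_of_nonneg_left hζV.2 hun) (hSb ζ)
    have h2 : rNorm (T.pathSet ζ) u r ≤ B := (le_div_iff₀ (by positivity)).2 h1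
    calc ∑ η ∈ (T.pathSet ζ).toFinset, u η ^ r
        = rNorm (T.pathSet ζ) u r ^ r := (rNorm_rpow _ u hu hr.ne').symm
      _ ≤ B ^ r := Real.rpow_le_rpow hun h2 hr.le
  -- bounding the sum over VSig
  have hcover : (VSig T w q σ ξ).toFinset ⊆ M.biUnion (fun ζ => (T.pathSet ζ).toFinset) := by
    intro η hη
    obtain ⟨ζ, hζ, hle⟩ := hmaxabove η (Set.mem_toFinset.1 hη)
    exact Finset.mem_biUnion.2 ⟨ζ, Set.mem_toFinset.2 hζ, Set.mem_toFinset.2 hle⟩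
  have hU : (∑ η ∈ (VSig T w q σ ξ).toFinset, u η ^ r) ≤ σ ^ (-q) * B ^ r := by
    calc (∑ η ∈ (VSig T w q σ ξ).toFinset, u η ^ r)
        ≤ ∑ η ∈ M.biUnion (fun ζ => (T.pathSet ζ).toFinset), u η ^ r :=
          Finset.sum_le_sum_of_subset_of_nonneg hcover
            (fun i _ _ => (Real.rpow_pos_of_pos (hu i) r).le)
      _ ≤ ∑ ζ ∈ M, ∑ η ∈ (T.pathSet ζ).toFinset, u η ^ r :=
          sum_biUnion_le' _ _ _ (fun x => (Real.rpow_pos_of_pos (hu x) r).le)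
      _ ≤ ∑ _ζ ∈ M, B ^ r := Finset.sum_le_sum hpath
      _ = (M.card : ℝ) * B ^ r := by rw [Finset.sum_const, nsmul_eq_mul]
      _ ≤ σ ^ (-q) * B ^ r :=
          mul_le_mul_of_nonneg_right hMcard (Real.rpow_nonneg hB.le r)
  have hLHS : rNorm (VSig T w q σ ξ) u r ≤ σ ^ (-q / r) * B := by
    rw [rNorm_eq]
    calc (∑ η ∈ (VSig T w q σ ξ).toFinset, u η ^ r) ^ (1 / r)
        ≤ (σ ^ (-q) * B ^ r) ^ (1 / r) :=
          Real.rpow_le_rpow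
            (Finset.sum_nonneg fun i _ => (Real.rpow_pos_of_pos (hu i) r).le) hU
            (by positivity)
      _ = σ ^ (-q / r) * B := by
          rw [Real.mul_rpow (Real.rpow_nonneg hσ0.le _) (Real.rpow_nonneg hB.le _),
            ← Real.rpow_mul hσ0.le, mul_one_div, one_div,
            Real.rpow_rpow_inv hB.le hr.ne']
  calc rNorm (VSig T w q σ ξ) u r * rNorm (T.subtree ξ) w q
      ≤ (σ ^ (-q / r) * B) * rNorm (T.subtree ξ) w q :=
        mul_le_mul_of_nonneg_right hLHS ht.le
    _ = (σ ^ (-q / r) * σ⁻¹) * S := by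
        rw [hBdef]; field_simp
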